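/- Let X and Y be finite types and let p be a strictly positive probability mass function on (X×Y)^{k+2} (states (x_0,y_0),…,(x_{k+1},y_{k+1})) satisfying the bipartite Markov property. If y_j is a sufficient statistic of x_j at time j = k, i.e. p(x_k | y_0,…,y_k) = p(x_k | y_k) for all arguments, then the multi-time-step transfer entropy equals the single-time-step transfer entropy: I(X_k : Y_{k+1} | (Y_0,…,Y_k)) = I(X_k : Y_{k+1} | Y_k). (Theorem 1, equivalence of the transfer entropies.) -/

import Mathlib

open Finset

/-- Marginal (pushforward) of a pmf `p` on `Ω` along an observable `f`. -/
def margin {Ω α : Type*} [Fintype Ω] [DecidableEq α] (p : Ω → ℝ) (f : Ω → α) (a : α) : ℝ :=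
  ∑ ω : Ω, if f ω = a then p ω else 0

/-- Conditional probability `p(a | b)` of observable `f` given observable `g`. -/
noncomputable def condProb {Ω α β : Type*} [Fintype Ω] [DecidableEq α] [DecidableEq β]
    (p : Ω → ℝ) (f : Ω → α) (g : Ω → β) (a : α) (b : β) : ℝ :=
  margin p (fun ω => (f ω, g ω)) (a, b) / margin p g b

/-- Mutual information `I(f : g)` of observables `f` and `g`. -/
noncomputable def mutualInfo {Ω α β : Type*} [Fintype Ω] [Fintype α] [Fintype β]
    [DecidableEq α] [DecidableEq β] (p : Ω → ℝ) (f : Ω → α) (g : Ω → β) : ℝ :=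
  ∑ a : α, ∑ b : β,
    margin p (fun ω => (f ω, g ω)) (a, b) *
      Real.log (margin p (fun ω => (f ω, g ω)) (a, b) / (margin p f a * margin p g b))

/-- Conditional mutual information `I(f : g | h)` of observables `f`, `g` given `h`. -/
noncomputable def condMI {Ω α β γ : Type*} [Fintype Ω] [Fintype α] [Fintype β] [Fintype γ]
    [DecidableEq α] [DecidableEq β] [DecidableEq γ]
    (p : Ω → ℝ) (f : Ω → α) (g : Ω → β) (h : Ω → γ) : ℝ :=
  ∑ a : α, ∑ b : β, ∑ c : γ,
    margin p (fun ω => (f ω, g ω, h ω)) (a, b, c) *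
      Real.log ((margin p (fun ω => (f ω, g ω, h ω)) (a, b, c) / margin p h c) /
        ((margin p (fun ω => (f ω, h ω)) (a, c) / margin p h c) *
          (margin p (fun ω => (g ω, h ω)) (b, c) / margin p h c)))

/-- The bipartite Markov property for a pmf on trajectories `(x_0,y_0),…,(x_{k+1},y_{k+1})`:
for every `0 ≤ j ≤ k`,
`p(x_{j+1}, y_{j+1} | x_0,…,x_j, y_0,…,y_j) = p(x_{j+1} | x_j, y_j) · p(y_{j+1} | x_j, y_j)`. -/
def BipartiteMarkov {X Y : Type*} [Fintype X] [Fintype Y] [DecidableEq X] [DecidableEq Y]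
    (k : ℕ) (p : (Fin (k + 2) → X × Y) → ℝ) : Prop :=
  ∀ j : Fin (k + 1), ∀ h : Fin (j.1 + 1) → X × Y, ∀ x' : X, ∀ y' : Y,
    condProb p (fun t => t j.succ)
        (fun t (i : Fin (j.1 + 1)) => t (Fin.castLE (Nat.succ_le_succ j.isLt.le) i))
        (x', y') h =
      condProb p (fun t => (t j.succ).1) (fun t => t j.castSucc) x' (h (Fin.last j.1)) *
        condProb p (fun t => (t j.succ).2) (fun t => t j.castSucc) y' (h (Fin.last j.1))


section helpers
variable {Ω : Type*} [Fintype Ω] (p : Ω → ℝ)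

private lemma margin_pos' {α : Type*} [DecidableEq α] (hpos : ∀ ω, 0 < p ω) (f : Ω → α) (a : α)
    (h : ∃ ω, f ω = a) : 0 < margin p f a := by
  obtain ⟨ω, hω⟩ := h
  apply Finset.sum_pos' (fun i _ => by split <;> [exact (hpos i).le; exact le_refl 0])
  exact ⟨ω, Finset.mem_univ ω, by simp [hω, hpos ω]⟩

private lemma margin_congr' {α β : Type*} [DecidableEq α] [DecidableEq β] (f : Ω → α) (g : Ω → β)
    (a : α) (b : β) (h : ∀ ω, f ω = a ↔ g ω = b) : margin p f a = margin p g b :=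
  Finset.sum_congr rfl fun ω _ => if_congr (h ω) rfl rfl

private lemma margin_comp' {α β : Type*} [Fintype α] [DecidableEq α] [DecidableEq β]
    (f : Ω → α) (φ : α → β) (b : β) :
    margin p (fun ω => φ (f ω)) b = ∑ a, if φ a = b then margin p f a else 0 := by
  have key : ∀ a : α, (if φ a = b then ∑ ω, if f ω = a then p ω else 0 else 0)
      = ∑ ω, if f ω = a then (if φ (f ω) = b then p ω else 0) else 0 := by
    intro a
    by_cases hc : φ a = b
    · rw [if_pos hc]
      exact Finset.sum_congr rfl fun ω _ => by
        by_cases hf : f ω = a <;> simp [hf, hc]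
    · rw [if_neg hc]
      refine (Finset.sum_eq_zero fun ω _ => ?_).symm
      by_cases hf : f ω = a <;> simp [hf, hc]
  show (∑ ω, if φ (f ω) = b then p ω else 0) = _
  unfold margin
  simp only [key]
  rw [Finset.sum_comm]
  refine Finset.sum_congr rfl fun ω _ => ?_
  rw [Finset.sum_ite_eq univ (f ω) (fun _ => if φ (f ω) = b then p ω else 0)]
  simp

private lemma margin_fst_sum' {α β : Type*} [Fintype α] [Fintype β] [DecidableEq α]
    [DecidableEq β] (f : Ω → α) (g : Ω → β) (b : β) :
    margin p g b = ∑ a, margin p (fun ω => (f ω, g ω)) (a, b) := by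
  have h2 := margin_comp' p (fun ω => (f ω, g ω)) Prod.snd b
  rw [show margin p g b = margin p (fun ω => Prod.snd (f ω, g ω)) b from rfl, h2,
    Fintype.sum_prod_type]
  refine Finset.sum_congr rfl fun a _ => ?_
  rw [Finset.sum_ite_eq' univ b (fun b' => margin p (fun ω => (f ω, g ω)) (a, b'))]
  simp

private lemma margin_pair_comp' {α η γ : Type*} [Fintype α] [Fintype η] [DecidableEq α]
    [DecidableEq η] [DecidableEq γ] (f : Ω → α) (g : Ω → η) (π : η → γ) (a : α) (c : γ) :
    margin p (fun ω => (f ω, π (g ω))) (a, c)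
      = ∑ h, if π h = c then margin p (fun ω => (f ω, g ω)) (a, h) else 0 := by
  rw [show margin p (fun ω => (f ω, π (g ω))) (a, c) = _ from
    margin_comp' p (fun ω => (f ω, g ω)) (fun x => (x.1, π x.2)) (a, c)]
  rw [Fintype.sum_prod_type]
  simp only [Prod.mk.injEq, ite_and, Finset.sum_ite_eq']
  simp

private lemma margin_triple_comp' {α β η γ : Type*} [Fintype α] [Fintype β] [Fintype η]
    [DecidableEq α] [DecidableEq β] [DecidableEq η] [DecidableEq γ]
    (A : Ω → α) (B : Ω → β) (H : Ω → η) (π : η → γ) (a : α) (b : β) (c : γ) :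
    margin p (fun ω => (A ω, B ω, π (H ω))) (a, b, c)
      = ∑ h, if π h = c then margin p (fun ω => (A ω, B ω, H ω)) (a, b, h) else 0 := by
  rw [show margin p (fun ω => (A ω, B ω, π (H ω))) (a, b, c) = _ from
    margin_comp' p (fun ω => (A ω, B ω, H ω)) (fun x => (x.1, x.2.1, π x.2.2)) (a, b, c)]
  rw [Fintype.sum_prod_type]
  simp only [Prod.mk.injEq, ite_and, Finset.sum_ite_eq']
  simp [Fintype.sum_prod_type, Finset.sum_ite_eq']

end helpers

private lemma core {Ω α β η γ : Type*} [Fintype Ω] [Fintype α] [Fintype β] [Fintype η] [Fintype γ]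
    [DecidableEq α] [DecidableEq β] [DecidableEq η] [DecidableEq γ] [Nonempty α] [Nonempty β]
    (p : Ω → ℝ) (hpos : ∀ ω, 0 < p ω)
    (A : Ω → α) (B : Ω → β) (H : Ω → η) (π : η → γ)
    (hπ : Function.Surjective π)
    (hsurj : ∀ a b h, ∃ ω, A ω = a ∧ B ω = b ∧ H ω = h)
    (q : α → γ → β → ℝ)
    (hmar : ∀ a b h, margin p (fun ω => (A ω, B ω, H ω)) (a, b, h)
        = margin p (fun ω => (A ω, H ω)) (a, h) * q a (π h) b)
    (hsuf : ∀ a h, condProb p A H a h = condProb p A (fun ω => π (H ω)) a (π h)) :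
    condMI p A B H = condMI p A B (fun ω => π (H ω)) := by
  -- positivity
  have posAH : ∀ a h, 0 < margin p (fun ω => (A ω, H ω)) (a, h) := by
    intro a h
    obtain ⟨ω, h1, h2, h3⟩ := hsurj a (Classical.arbitrary β) h
    exact margin_pos' p hpos _ _ ⟨ω, by simp [h1, h3]⟩
  have posBH : ∀ b h, 0 < margin p (fun ω => (B ω, H ω)) (b, h) := by
    intro b h
    obtain ⟨ω, h1, h2, h3⟩ := hsurj (Classical.arbitrary α) b h
    exact margin_pos' p hpos _ _ ⟨ω, by simp [h2, h3]⟩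
  have posH : ∀ h, 0 < margin p H h := by
    intro h
    obtain ⟨ω, h1, h2, h3⟩ := hsurj (Classical.arbitrary α) (Classical.arbitrary β) h
    exact margin_pos' p hpos _ _ ⟨ω, h3⟩
  have posC : ∀ c, 0 < margin p (fun ω => π (H ω)) c := by
    intro c
    obtain ⟨h, rfl⟩ := hπ c
    obtain ⟨ω, h1, h2, h3⟩ := hsurj (Classical.arbitrary α) (Classical.arbitrary β) h
    exact margin_pos' p hpos _ _ ⟨ω, by rw [h3]⟩
  have posAC : ∀ a c, 0 < margin p (fun ω => (A ω, π (H ω))) (a, c) := by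
    intro a c
    obtain ⟨h, rfl⟩ := hπ c
    obtain ⟨ω, h1, h2, h3⟩ := hsurj a (Classical.arbitrary β) h
    exact margin_pos' p hpos _ _ ⟨ω, by rw [h1, h3]⟩
  have posBC : ∀ b c, 0 < margin p (fun ω => (B ω, π (H ω))) (b, c) := by
    intro b c
    obtain ⟨h, rfl⟩ := hπ c
    obtain ⟨ω, h1, h2, h3⟩ := hsurj (Classical.arbitrary α) b h
    exact margin_pos' p hpos _ _ ⟨ω, by rw [h2, h3]⟩
  -- coarse Markov factorization
  have hn3 : ∀ a b c, margin p (fun ω => (A ω, B ω, π (H ω))) (a, b, c)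
      = margin p (fun ω => (A ω, π (H ω))) (a, c) * q a c b := by
    intro a b c
    rw [margin_triple_comp', margin_pair_comp', Finset.sum_mul]
    refine Finset.sum_congr rfl fun h _ => ?_
    by_cases hc : π h = c
    · rw [if_pos hc, if_pos hc, hmar, hc]
    · rw [if_neg hc, if_neg hc, zero_mul]
  -- sufficiency, cross-multiplied
  have hsuf' : ∀ a h, margin p (fun ω => (A ω, H ω)) (a, h) * margin p (fun ω => π (H ω)) (π h)
      = margin p (fun ω => (A ω, π (H ω))) (a, π h) * margin p H h := by
    intro a h
    have hs := hsuf a h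
    unfold condProb at hs
    rw [div_eq_div_iff (ne_of_gt (posH h)) (ne_of_gt (posC (π h)))] at hs
    exact hs
  -- p(b | h) determined by π h
  have hBH : ∀ b h, margin p (fun ω => (B ω, H ω)) (b, h) * margin p (fun ω => π (H ω)) (π h)
      = margin p H h * margin p (fun ω => (B ω, π (H ω))) (b, π h) := by
    intro b h
    rw [margin_fst_sum' p A (fun ω => (B ω, H ω)) (b, h),
        margin_fst_sum' p A (fun ω => (B ω, π (H ω))) (b, π h),
        Finset.sum_mul, Finset.mul_sum]
    refine Finset.sum_congr rfl fun a _ => ?_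
    rw [hmar a b h, hn3 a b (π h)]
    linear_combination (q a (π h) b) * hsuf' a h
  -- ratio identity
  have ratio : ∀ a b h,
      (margin p (fun ω => (A ω, B ω, H ω)) (a, b, h) / margin p H h) /
        ((margin p (fun ω => (A ω, H ω)) (a, h) / margin p H h) *
          (margin p (fun ω => (B ω, H ω)) (b, h) / margin p H h))
      = (margin p (fun ω => (A ω, B ω, π (H ω))) (a, b, π h) / margin p (fun ω => π (H ω)) (π h)) /
        ((margin p (fun ω => (A ω, π (H ω))) (a, π h) / margin p (fun ω => π (H ω)) (π h)) *
          (margin p (fun ω => (B ω, π (H ω))) (b, π h) / margin p (fun ω => π (H ω)) (π h))) := by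
    intro a b h
    have hx : margin p (fun ω => (B ω, H ω)) (b, h)
        = margin p H h * margin p (fun ω => (B ω, π (H ω))) (b, π h)
            / margin p (fun ω => π (H ω)) (π h) :=
      (eq_div_iff (ne_of_gt (posC (π h)))).mpr (hBH b h)
    rw [hmar a b h, hn3 a b (π h), hx]
    have h1 := posAH a h
    have h2 := posH h
    have h3 := posC (π h)
    have h4 := posAC a (π h)
    have h5 := posBC b (π h)
    field_simp
  -- assemble
  unfold condMI
  refine Finset.sum_congr rfl fun a _ => Finset.sum_congr rfl fun b _ => ?_
  calc (∑ h, margin p (fun ω => (A ω, B ω, H ω)) (a, b, h) *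
        Real.log ((margin p (fun ω => (A ω, B ω, H ω)) (a, b, h) / margin p H h) /
          ((margin p (fun ω => (A ω, H ω)) (a, h) / margin p H h) *
            (margin p (fun ω => (B ω, H ω)) (b, h) / margin p H h))))
      = ∑ h, ∑ c, if π h = c then margin p (fun ω => (A ω, B ω, H ω)) (a, b, h) *
          Real.log ((margin p (fun ω => (A ω, B ω, π (H ω))) (a, b, c) /
              margin p (fun ω => π (H ω)) c) /
            ((margin p (fun ω => (A ω, π (H ω))) (a, c) / margin p (fun ω => π (H ω)) c) *
              (margin p (fun ω => (B ω, π (H ω))) (b, c) / margin p (fun ω => π (H ω)) c)))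
          else 0 := by
        refine Finset.sum_congr rfl fun h _ => ?_
        rw [Finset.sum_ite_eq]
        simp [ratio a b h]
    _ = ∑ c, ∑ h, if π h = c then margin p (fun ω => (A ω, B ω, H ω)) (a, b, h) *
          Real.log ((margin p (fun ω => (A ω, B ω, π (H ω))) (a, b, c) /
              margin p (fun ω => π (H ω)) c) /
            ((margin p (fun ω => (A ω, π (H ω))) (a, c) / margin p (fun ω => π (H ω)) c) *
              (margin p (fun ω => (B ω, π (H ω))) (b, c) / margin p (fun ω => π (H ω)) c)))
          else 0 := Finset.sum_comm
    _ = ∑ c, margin p (fun ω => (A ω, B ω, π (H ω))) (a, b, c) *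
          Real.log ((margin p (fun ω => (A ω, B ω, π (H ω))) (a, b, c) /
              margin p (fun ω => π (H ω)) c) /
            ((margin p (fun ω => (A ω, π (H ω))) (a, c) / margin p (fun ω => π (H ω)) c) *
              (margin p (fun ω => (B ω, π (H ω))) (b, c) / margin p (fun ω => π (H ω)) c))) := by
        refine Finset.sum_congr rfl fun c _ => ?_
        rw [margin_triple_comp' p A B H π a b c, Finset.sum_mul]
        refine Finset.sum_congr rfl fun h _ => ?_
        by_cases hc : π h = c <;> simp [hc]

/-- Theorem 1 (equivalence of the transfer entropies): if `y_k` is a sufficient statistic of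
`x_k`, i.e. `p(x_k | y_0,…,y_k) = p(x_k | y_k)`, then
`I(X_k : Y_{k+1} | (Y_0,…,Y_k)) = I(X_k : Y_{k+1} | Y_k)`. -/
theorem multi_transfer_eq_single_transfer {X Y : Type*} [Fintype X] [Fintype Y]
    [DecidableEq X] [DecidableEq Y] (k : ℕ)
    (p : (Fin (k + 2) → X × Y) → ℝ)
    (hpos : ∀ ω, 0 < p ω) (hnorm : ∑ ω, p ω = 1)
    (hbip : BipartiteMarkov k p)
    (hsuff : ∀ (x : X) (ys : Fin (k + 1) → Y),
      condProb p (fun t => (t ⟨k, by omega⟩).1)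
          (fun t (i : Fin (k + 1)) => (t i.castSucc).2) x ys =
        condProb p (fun t => (t ⟨k, by omega⟩).1)
          (fun t => (t ⟨k, by omega⟩).2) x (ys (Fin.last k))) :
    condMI p (fun t => (t ⟨k, by omega⟩).1) (fun t => (t (Fin.last (k + 1))).2)
        (fun t (i : Fin (k + 1)) => (t i.castSucc).2) =
      condMI p (fun t => (t ⟨k, by omega⟩).1) (fun t => (t (Fin.last (k + 1))).2)
        (fun t => (t ⟨k, by omega⟩).2) := by
  have hne : Nonempty (Fin (k + 2) → X × Y) := by
    by_contra hc
    rw [not_nonempty_iff] at hc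
    rw [Finset.univ_eq_empty, Finset.sum_empty] at hnorm
    exact one_ne_zero hnorm.symm
  obtain ⟨t0⟩ := hne
  -- key0
  have key0 : ∀ (h : Fin (k+1) → X × Y) (x' : X) (y' : Y),
      margin p (fun t => (t (Fin.last (k+1)), fun i : Fin (k+1) => t i.castSucc)) ((x', y'), h)
        = margin p (fun t => fun i : Fin (k+1) => t i.castSucc) h *
          (condProb p (fun t => (t (Fin.last (k+1))).1)
              (fun t => t (⟨k, by omega⟩ : Fin (k+2))) x' (h (Fin.last k)) *
           condProb p (fun t => (t (Fin.last (k+1))).2)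
              (fun t => t (⟨k, by omega⟩ : Fin (k+2))) y' (h (Fin.last k))) := by
    intro h x' y'
    have hFpos : 0 < margin p (fun t => fun i : Fin (k+1) => t i.castSucc) h := by
      refine margin_pos' p hpos _ _ ⟨fun i => if hi : (i : ℕ) < k + 1 then h ⟨i, hi⟩ else h (Fin.last k), ?_⟩
      funext i
      have : ((i.castSucc : Fin (k+2)) : ℕ) < k + 1 := i.isLt
      beta_reduce
      rw [dif_pos this]
      exact congrArg h (Fin.ext rfl)
    have hb : condProb p (fun t => t (Fin.last (k+1)))
        (fun t => fun i : Fin (k+1) => t i.castSucc) (x', y') h =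
        condProb p (fun t => (t (Fin.last (k+1))).1)
            (fun t => t (⟨k, by omega⟩ : Fin (k+2))) x' (h (Fin.last k)) *
          condProb p (fun t => (t (Fin.last (k+1))).2)
            (fun t => t (⟨k, by omega⟩ : Fin (k+2))) y' (h (Fin.last k)) :=
      hbip (Fin.last k) h x' y'
    unfold condProb at hb ⊢
    rw [div_eq_iff (ne_of_gt hFpos)] at hb
    rw [hb]
    ring
  -- sum of conditional probabilities over x' is 1
  have hsum1 : ∀ s : X × Y,
      (∑ x', condProb p (fun t => (t (Fin.last (k+1))).1)
          (fun t => t (⟨k, by omega⟩ : Fin (k+2))) x' s) = 1 := by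
    intro s
    have hKpos : 0 < margin p (fun t => t (⟨k, by omega⟩ : Fin (k+2))) s :=
      margin_pos' p hpos _ _ ⟨fun _ => s, rfl⟩
    unfold condProb
    rw [← Finset.sum_div,
      ← margin_fst_sum' p (fun t => (t (Fin.last (k+1))).1) (fun t => t (⟨k, by omega⟩ : Fin (k+2))) s]
    exact div_self (ne_of_gt hKpos)
  -- key1
  have key1 : ∀ (h : Fin (k+1) → X × Y) (b : Y),
      margin p (fun t => ((t (Fin.last (k+1))).2, fun i : Fin (k+1) => t i.castSucc)) (b, h)
        = margin p (fun t => fun i : Fin (k+1) => t i.castSucc) h *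
          condProb p (fun t => (t (Fin.last (k+1))).2)
            (fun t => t (⟨k, by omega⟩ : Fin (k+2))) b (h (Fin.last k)) := by
    intro h b
    rw [margin_fst_sum' p (fun t => (t (Fin.last (k+1))).1)
      (fun t => ((t (Fin.last (k+1))).2, fun i : Fin (k+1) => t i.castSucc)) (b, h)]
    have hre : ∀ x' : X,
        margin p (fun t => ((t (Fin.last (k+1))).1,
          ((t (Fin.last (k+1))).2, fun i : Fin (k+1) => t i.castSucc))) (x', (b, h))
        = margin p (fun t => (t (Fin.last (k+1)), fun i : Fin (k+1) => t i.castSucc)) ((x', b), h) := by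
      intro x'
      refine margin_congr' p _ _ _ _ fun t => ?_
      simp only [Prod.ext_iff, Prod.fst, Prod.snd]
      tauto
    calc (∑ x', margin p (fun t => ((t (Fin.last (k+1))).1,
            ((t (Fin.last (k+1))).2, fun i : Fin (k+1) => t i.castSucc))) (x', (b, h)))
        = ∑ x', margin p (fun t => fun i : Fin (k+1) => t i.castSucc) h *
            (condProb p (fun t => (t (Fin.last (k+1))).1)
                (fun t => t (⟨k, by omega⟩ : Fin (k+2))) x' (h (Fin.last k)) *
             condProb p (fun t => (t (Fin.last (k+1))).2)
                (fun t => t (⟨k, by omega⟩ : Fin (k+2))) b (h (Fin.last k))) := by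
          refine Finset.sum_congr rfl fun x' _ => ?_
          rw [hre x', key0 h x' b]
      _ = (margin p (fun t => fun i : Fin (k+1) => t i.castSucc) h *
            condProb p (fun t => (t (Fin.last (k+1))).2)
              (fun t => t (⟨k, by omega⟩ : Fin (k+2))) b (h (Fin.last k))) *
          ∑ x', condProb p (fun t => (t (Fin.last (k+1))).1)
              (fun t => t (⟨k, by omega⟩ : Fin (k+2))) x' (h (Fin.last k)) := by
          rw [Finset.mul_sum]
          exact Finset.sum_congr rfl fun x' _ => by ring
      _ = _ := by rw [hsum1, mul_one]
  -- hmar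
  have hmar : ∀ (a : X) (b : Y) (ys : Fin (k+1) → Y),
      margin p (fun t => ((t (⟨k, by omega⟩ : Fin (k+2))).1, (t (Fin.last (k+1))).2,
          fun i : Fin (k+1) => (t i.castSucc).2)) (a, b, ys)
        = margin p (fun t => ((t (⟨k, by omega⟩ : Fin (k+2))).1,
            fun i : Fin (k+1) => (t i.castSucc).2)) (a, ys) *
          condProb p (fun t => (t (Fin.last (k+1))).2)
            (fun t => t (⟨k, by omega⟩ : Fin (k+2))) b (a, ys (Fin.last k)) := by
    intro a b ys
    have e1 : margin p (fun t => ((t (⟨k, by omega⟩ : Fin (k+2))).1,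
          fun i : Fin (k+1) => (t i.castSucc).2)) (a, ys)
        = ∑ h : Fin (k+1) → X × Y,
            if ((h (Fin.last k)).1, fun i => (h i).2) = ((a, ys) : X × (Fin (k+1) → Y))
            then margin p (fun t => fun i : Fin (k+1) => t i.castSucc) h else 0 :=
      margin_comp' p (fun t => fun i : Fin (k+1) => t i.castSucc)
        (fun h => ((h (Fin.last k)).1, fun i => (h i).2)) (a, ys)
    have e2 : margin p (fun t => ((t (⟨k, by omega⟩ : Fin (k+2))).1, (t (Fin.last (k+1))).2,
          fun i : Fin (k+1) => (t i.castSucc).2)) (a, b, ys)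
        = ∑ y' : Y, ∑ h : Fin (k+1) → X × Y,
            if ((h (Fin.last k)).1, y', fun i => (h i).2) = ((a, b, ys) : X × Y × (Fin (k+1) → Y))
            then margin p (fun t => ((t (Fin.last (k+1))).2,
              fun i : Fin (k+1) => t i.castSucc)) (y', h) else 0 := by
      have e3 := margin_comp' p
        (fun t => ((t (Fin.last (k+1))).2, fun i : Fin (k+1) => t i.castSucc))
        (fun z => ((z.2 (Fin.last k)).1, z.1, fun i => (z.2 i).2)) ((a, b, ys))
      rw [Fintype.sum_prod_type] at e3
      exact e3
    rw [e2, Finset.sum_comm, e1, Finset.sum_mul]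
    refine Finset.sum_congr rfl fun h _ => ?_
    by_cases hP : ((h (Fin.last k)).1, fun i => (h i).2) = ((a, ys) : X × (Fin (k + 1) → Y))
    · have h1 : (h (Fin.last k)).1 = a := congrArg Prod.fst hP
      have h2 : (fun i => (h i).2) = ys := congrArg Prod.snd hP
      have h3 : (h (Fin.last k)).2 = ys (Fin.last k) := congrFun h2 (Fin.last k)
      rw [if_pos hP]
      have hcond : ∀ y' : Y, (((h (Fin.last k)).1, y', fun i => (h i).2)
          = ((a, b, ys) : X × Y × (Fin (k+1) → Y))) ↔ y' = b := by
        intro y'; simp [Prod.ext_iff, h1, h2]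
      calc (∑ y', if ((h (Fin.last k)).1, y', fun i => (h i).2)
              = ((a, b, ys) : X × Y × (Fin (k+1) → Y))
              then margin p (fun t => ((t (Fin.last (k+1))).2,
                fun i : Fin (k+1) => t i.castSucc)) (y', h) else 0)
          = ∑ y', if y' = b then margin p (fun t => ((t (Fin.last (k+1))).2,
              fun i : Fin (k+1) => t i.castSucc)) (y', h) else 0 :=
            Finset.sum_congr rfl fun y' _ => if_congr (hcond y') rfl rfl
        _ = margin p (fun t => ((t (Fin.last (k+1))).2,
              fun i : Fin (k+1) => t i.castSucc)) (b, h) := by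
            rw [Finset.sum_ite_eq' univ b]; simp
        _ = _ := by
            have h4 : h (Fin.last k) = (a, ys (Fin.last k)) := Prod.ext h1 h3
            rw [key1 h b, h4]
    · rw [if_neg hP, zero_mul]
      refine Finset.sum_eq_zero fun y' _ => ?_
      rw [if_neg]
      intro hcon
      apply hP
      simp only [Prod.mk.injEq] at hcon
      exact Prod.ext hcon.1 hcon.2.2
  have hsurj : ∀ (a : X) (b : Y) (ys : Fin (k+1) → Y), ∃ t : Fin (k+2) → X × Y,
      (t (⟨k, by omega⟩ : Fin (k+2))).1 = a ∧ (t (Fin.last (k+1))).2 = b ∧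
      (fun i : Fin (k+1) => (t i.castSucc).2) = ys := by
    intro a b ys
    refine ⟨fun i => if hi : (i : ℕ) < k + 1 then (a, ys ⟨i, hi⟩) else (a, b), ?_, ?_, ?_⟩
    · have hk : ((⟨k, by omega⟩ : Fin (k+2)) : ℕ) < k + 1 := Nat.lt_succ_self k
      beta_reduce
      rw [dif_pos hk]
    · have hk : ¬ ((Fin.last (k+1) : Fin (k+2)) : ℕ) < k + 1 := by simp
      beta_reduce
      rw [dif_neg hk]
    · funext i
      have hi : ((i.castSucc : Fin (k+2)) : ℕ) < k + 1 := i.isLt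
      beta_reduce
      rw [dif_pos hi]
      exact congrArg ys (Fin.ext rfl)
  have hπ : Function.Surjective (fun ys : Fin (k+1) → Y => ys (Fin.last k)) :=
    fun c => ⟨fun _ => c, rfl⟩
  haveI : Nonempty X := ⟨(t0 0).1⟩
  haveI : Nonempty Y := ⟨(t0 0).2⟩
  exact core p hpos (fun t => (t (⟨k, by omega⟩ : Fin (k+2))).1)
    (fun t => (t (Fin.last (k+1))).2)
    (fun t (i : Fin (k+1)) => (t i.castSucc).2) (fun ys => ys (Fin.last k)) hπ hsurj
    (fun a c b => condProb p (fun t => (t (Fin.last (k+1))).2)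
      (fun t => t (⟨k, by omega⟩ : Fin (k+2))) b (a, c))
    hmar hsuff
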